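/- Fix m̄ ≠ 0, μ ≠ 0, ς > 0, σ > 0, ρ ∈ (−1,1), q ∈ (0,1), and regard the reversion speed k as a variable. With σ₁ = ρσ, σ₂ = √(1−ρ²)σ, α₂ = σ₁² + σ₂²/(1−q) (independent of k), α₁(k) = k + qμσ₁/ς, α₃(k) = k·m̄, α₄(k) = √(α₁(k)² + q(1−q)α₂μ²/ς²), B(k) = (α₄(k)−α₁(k))/α₂, C(k) = α₃(k)(α₄(k)−α₁(k))/(α₂·α₄(k)), define λ(k) := −(1/2)α₂·C(k)² + α₃(k)·C(k) + (1/2)(σ₁²+σ₂²)·B(k). Then for every k > 0, λ is differentiable at k with λ'(k) = −α₂·(m̄/α₃ − (α₄+α₁)/α₄²)·C² + (2m̄ − α₃(α₄+α₁)/α₄²)·C − (σ₁²+σ₂²)·B/(2α₄), where all quantities on the right are evaluated at k. -/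

import Mathlib

set_option maxHeartbeats 1000000 in
/-- Kim–Omberg model, sensitivity of the recurrent eigenvalue with respect to the
reversion speed `k`: with `λ(k) = -(1/2)α₂C(k)² + α₃(k)C(k) + (1/2)σ²B(k)`, for every
`k > 0`, `λ'(k) = -α₂(m̄/α₃ - (α₄+α₁)/α₄²)C² + (2m̄ - α₃(α₄+α₁)/α₄²)C - σ²B/(2α₄)`. -/
theorem stmt18 (m μ ς σ ρ q : ℝ)
    (hm : m ≠ 0) (hμ : μ ≠ 0) (hς : 0 < ς) (hσ : 0 < σ)
    (hρ : ρ ∈ Set.Ioo (-1 : ℝ) 1) (hq : q ∈ Set.Ioo (0 : ℝ) 1)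
    (σ₁ σ₂ α₂ : ℝ)
    (hσ₁ : σ₁ = ρ * σ) (hσ₂ : σ₂ = Real.sqrt (1 - ρ ^ 2) * σ)
    (hα₂ : α₂ = σ₁ ^ 2 + σ₂ ^ 2 / (1 - q))
    (α₁ α₃ α₄ B C lam : ℝ → ℝ)
    (hα₁ : ∀ k, α₁ k = k + q * μ * σ₁ / ς)
    (hα₃ : ∀ k, α₃ k = k * m)
    (hα₄ : ∀ k, α₄ k = Real.sqrt ((α₁ k) ^ 2 + q * (1 - q) * α₂ * μ ^ 2 / ς ^ 2))
    (hB : ∀ k, B k = (α₄ k - α₁ k) / α₂)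
    (hC : ∀ k, C k = α₃ k * (α₄ k - α₁ k) / (α₂ * α₄ k))
    (hlam : ∀ k, lam k = -(1 / 2) * α₂ * (C k) ^ 2 + α₃ k * C k
      + (1 / 2) * (σ₁ ^ 2 + σ₂ ^ 2) * B k) :
    ∀ k > (0 : ℝ),
      HasDerivAt lam
        (-α₂ * (m / α₃ k - (α₄ k + α₁ k) / (α₄ k) ^ 2) * (C k) ^ 2
          + (2 * m - α₃ k * (α₄ k + α₁ k) / (α₄ k) ^ 2) * C k
          - (σ₁ ^ 2 + σ₂ ^ 2) * B k / (2 * α₄ k)) k := by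
  intro k hk
  obtain ⟨hρ1, hρ2⟩ := hρ
  obtain ⟨hq0, hq1⟩ := hq
  set c := q * μ * σ₁ / ς with hc
  set D := q * (1 - q) * α₂ * μ ^ 2 / ς ^ 2 with hDdef
  have hρsq : ρ ^ 2 < 1 := by nlinarith
  have hσ₂sq : σ₂ ^ 2 = (1 - ρ ^ 2) * σ ^ 2 := by
    rw [hσ₂, mul_pow, Real.sq_sqrt (by nlinarith)]
  have hσ₂pos : 0 < σ₂ ^ 2 := by
    rw [hσ₂sq]; exact mul_pos (by linarith) (by positivity)
  have hα₂pos : 0 < α₂ := by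
    rw [hα₂]
    have h1 : 0 < σ₂ ^ 2 / (1 - q) := div_pos hσ₂pos (by linarith)
    nlinarith [sq_nonneg σ₁]
  have hμ2 : (0:ℝ) < μ ^ 2 := by positivity
  have hDpos : 0 < D := by
    rw [hDdef]
    apply div_pos _ (by positivity)
    apply mul_pos (mul_pos (mul_pos hq0 (by linarith)) hα₂pos) hμ2
  have hApos : ∀ x : ℝ, 0 < (x + c) ^ 2 + D := fun x => by nlinarith [sq_nonneg (x + c)]
  have hS : ∀ x, α₄ x = Real.sqrt ((x + c) ^ 2 + D) := fun x => by
    rw [hα₄, hα₁]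
  set s := Real.sqrt ((k + c) ^ 2 + D) with hsdef
  have hspos : 0 < s := Real.sqrt_pos.mpr (hApos k)
  have hsne : s ≠ 0 := ne_of_gt hspos
  have hα₂ne : α₂ ≠ 0 := ne_of_gt hα₂pos
  have hα₃ne : k * m ≠ 0 := mul_ne_zero (ne_of_gt hk) hm
  -- derivative of inner function
  have hid : HasDerivAt (fun x : ℝ => x + c) 1 k := (hasDerivAt_id k).add_const c
  have hA' : HasDerivAt (fun x : ℝ => (x + c) ^ 2 + D) (2 * (k + c)) k := by
    have := (hid.pow 2).add_const D
    refine this.congr_deriv (Eq.symm ?_)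
    ring
  have hS' : HasDerivAt (fun x : ℝ => Real.sqrt ((x + c) ^ 2 + D)) ((k + c) / s) k := by
    have := (Real.hasDerivAt_sqrt (ne_of_gt (hApos k))).comp k hA'
    refine this.congr_deriv (Eq.symm ?_)
    rw [← hsdef]
    field_simp
  have hB' : HasDerivAt (fun x : ℝ => (Real.sqrt ((x + c) ^ 2 + D) - (x + c)) / α₂)
      (((k + c) / s - 1) / α₂) k := (hS'.sub hid).div_const α₂
  have hN' : HasDerivAt (fun x : ℝ => x * m * (Real.sqrt ((x + c) ^ 2 + D) - (x + c)))
      (m * (s - (k + c)) + k * m * ((k + c) / s - 1)) k := by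
    have h1 : HasDerivAt (fun x : ℝ => x * m) m k := by
      simpa using (hasDerivAt_id k).mul_const m
    exact h1.mul (hS'.sub hid)
  have hden' : HasDerivAt (fun x : ℝ => α₂ * Real.sqrt ((x + c) ^ 2 + D))
      (α₂ * ((k + c) / s)) k := hS'.const_mul α₂
  have hdenne : α₂ * s ≠ 0 := mul_ne_zero hα₂ne hsne
  have hC' : HasDerivAt
      (fun x : ℝ => x * m * (Real.sqrt ((x + c) ^ 2 + D) - (x + c)) /
        (α₂ * Real.sqrt ((x + c) ^ 2 + D)))
      (((m * (s - (k + c)) + k * m * ((k + c) / s - 1)) * (α₂ * s) -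
        k * m * (s - (k + c)) * (α₂ * ((k + c) / s))) / (α₂ * s) ^ 2) k :=
    hN'.div hden' hdenne
  have hCval : ∀ x, C x = x * m * (Real.sqrt ((x + c) ^ 2 + D) - (x + c)) /
      (α₂ * Real.sqrt ((x + c) ^ 2 + D)) := fun x => by
    rw [hC, hα₃, hα₁, hS]
  have hBval : ∀ x, B x = (Real.sqrt ((x + c) ^ 2 + D) - (x + c)) / α₂ := fun x => by
    rw [hB, hα₁, hS]
  -- derivative of lam as explicit function
  set Cd := ((m * (s - (k + c)) + k * m * ((k + c) / s - 1)) * (α₂ * s) -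
        k * m * (s - (k + c)) * (α₂ * ((k + c) / s))) / (α₂ * s) ^ 2 with hCd
  have hmain : HasDerivAt lam
      (-(1/2) * α₂ * (2 * C k * Cd) + (m * C k + k * m * Cd)
        + (1/2) * (σ₁ ^ 2 + σ₂ ^ 2) * (((k + c) / s - 1) / α₂)) k := by
    have hfun : lam = fun x =>
        -(1/2) * α₂ * (x * m * (Real.sqrt ((x + c) ^ 2 + D) - (x + c)) /
          (α₂ * Real.sqrt ((x + c) ^ 2 + D))) ^ 2
        + x * m * (x * m * (Real.sqrt ((x + c) ^ 2 + D) - (x + c)) /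
          (α₂ * Real.sqrt ((x + c) ^ 2 + D)))
        + (1/2) * (σ₁ ^ 2 + σ₂ ^ 2) *
          ((Real.sqrt ((x + c) ^ 2 + D) - (x + c)) / α₂) := by
      funext x
      rw [hlam, hCval, hBval, hα₃]
    rw [hfun]
    have h1 : HasDerivAt (fun x : ℝ => x * m) m k := by
      simpa using (hasDerivAt_id k).mul_const m
    have hsq := (hC'.pow 2).const_mul (-(1/2) * α₂)
    have hmid := h1.mul hC'
    have hlast := hB'.const_mul ((1/2) * (σ₁ ^ 2 + σ₂ ^ 2))
    have := (hsq.add hmid).add hlast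
    refine this.congr_deriv (Eq.symm ?_)
    rw [hCval k]
    norm_num
  convert hmain using 1
  rw [hCval k, hBval k, hα₃ k, hα₁ k, hS k, ← hsdef, hCd]
  have hs2 : s ^ 2 = (k + c) ^ 2 + D := Real.sq_sqrt (le_of_lt (hApos k))
  field_simp
  ring
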